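/- Let E > 0 be a real number and K ≥ 1 a natural number. Define q̃_E^{(K)} : ℝ^K → ℝ by q̃_E^{(K)}(t) = π^{−K/2}·(1+2K·E)^{−1/2}·exp(−Σ_{i=1}^K t_i² + 2E·(Σ_{i=1}^K t_i)²/(1+2K·E)) and q̃_E : ℝ → ℝ by q̃_E(t) = (π(1+2E))^{−1/2}·exp(−t²/(1+2E)). Then ∫_{ℝ^K} q̃_E^{(K)}(t) · ln( q̃_E^{(K)}(t) / Π_{i=1}^K q̃_E(t_i) ) dt = (1/2)·ln( (1+2E)^K / (1+2K·E) ). -/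

import Mathlib

open MeasureTheory Real Filter Set

lemma integrable_sq_exp {b : ℝ} (hb : 0 < b) :
    Integrable (fun x : ℝ => x ^ 2 * Real.exp (-b * x ^ 2)) := by
  have h := integrable_rpow_mul_exp_neg_mul_sq hb (by norm_num : (-1:ℝ) < 2)
  have : ∀ x : ℝ, x ^ (2:ℝ) = x ^ 2 := fun x => by
    rw [show (2:ℝ) = ((2:ℕ):ℝ) by norm_num, Real.rpow_natCast]
  simpa [this] using h

lemma integral_sq_exp {b : ℝ} (hb : 0 < b) :
    ∫ x : ℝ, x ^ 2 * Real.exp (-b * x ^ 2) = Real.sqrt (π / b) / (2 * b) := by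
  have hb' : (2*b) ≠ 0 := by positivity
  -- integration by parts on Ioi 0
  have key : ∫ x in Ioi (0:ℝ),
      (x ^ 2 * Real.exp (-b * x ^ 2) - (2*b)⁻¹ * Real.exp (-b * x ^ 2)) = 0 := by
    have hderiv : ∀ x ∈ Ici (0:ℝ), HasDerivAt (fun y : ℝ => -(2*b)⁻¹ * y * Real.exp (-b * y ^ 2))
        (x ^ 2 * Real.exp (-b * x ^ 2) - (2*b)⁻¹ * Real.exp (-b * x ^ 2)) x := by
      intro x _
      have h1 : HasDerivAt (fun y : ℝ => -b * y ^ 2) (-b * (2 * x)) x := by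
        simpa using ((hasDerivAt_pow 2 x).const_mul (-b))
      have h2 : HasDerivAt (fun y : ℝ => Real.exp (-b * y ^ 2)) (Real.exp (-b * x ^ 2) * (-b * (2*x))) x := (Real.hasDerivAt_exp _).comp x h1
      have h3 : HasDerivAt (fun y : ℝ => -(2*b)⁻¹ * y) (-(2*b)⁻¹) x := by
        simpa using (hasDerivAt_id x).const_mul (-(2*b)⁻¹)
      have := h3.mul h2
      refine this.congr_deriv ?_
      field_simp
      ring
    have hint : IntegrableOn (fun x : ℝ =>
        x ^ 2 * Real.exp (-b * x ^ 2) - (2*b)⁻¹ * Real.exp (-b * x ^ 2)) (Ioi 0) := by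
      apply Integrable.integrableOn
      exact (integrable_sq_exp hb).sub ((integrable_exp_neg_mul_sq hb).const_mul _)
    have htends : Tendsto (fun y : ℝ => -(2*b)⁻¹ * y * Real.exp (-b * y ^ 2)) atTop (nhds 0) := by
      have h0 : Tendsto (fun y : ℝ => y * Real.exp (-b * y ^ 2)) atTop (nhds 0) := by
        have hlo := rpow_mul_exp_neg_mul_sq_isLittleO_exp_neg hb 1
        have h2 : Tendsto (fun x : ℝ => Real.exp (-(1/2) * x)) atTop (nhds 0) := by
          rw [show (fun x : ℝ => Real.exp (-(1/2) * x)) = (fun x : ℝ => Real.exp (-((1/2) * x))) by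
            funext x; ring_nf]
          have hlin : Tendsto (fun x : ℝ => -((1/2) * x)) atTop atBot :=
            tendsto_neg_atTop_atBot.comp (tendsto_id.const_mul_atTop (by norm_num : (0:ℝ) < 1/2))
          exact Real.tendsto_exp_atBot.comp hlin
        have := hlo.trans_tendsto ?_
        · simpa [Real.rpow_one] using this
        · exact h2
      have := h0.const_mul (-(2*b)⁻¹)
      simpa [mul_assoc] using this
    have := integral_Ioi_of_hasDerivAt_of_tendsto' hderiv hint htends
    simpa using this
  have hsplit : ∫ x in Ioi (0:ℝ), x ^ 2 * Real.exp (-b * x ^ 2)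
      = ∫ x in Ioi (0:ℝ), (2*b)⁻¹ * Real.exp (-b * x ^ 2) := by
    have h1 : IntegrableOn (fun x : ℝ => x ^ 2 * Real.exp (-b * x ^ 2)) (Ioi 0) :=
      (integrable_sq_exp hb).integrableOn
    have h2 : IntegrableOn (fun x : ℝ => (2*b)⁻¹ * Real.exp (-b * x ^ 2)) (Ioi 0) :=
      ((integrable_exp_neg_mul_sq hb).const_mul _).integrableOn
    have := integral_sub h1 h2
    rw [key] at this
    linarith [this]
  have habs : ∫ x : ℝ, x ^ 2 * Real.exp (-b * x ^ 2)
      = 2 * ∫ x in Ioi (0:ℝ), x ^ 2 * Real.exp (-b * x ^ 2) := by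
    rw [← integral_comp_abs (f := fun x : ℝ => x ^ 2 * Real.exp (-b * x ^ 2))]
    congr 1
    funext x
    rw [sq_abs]
  rw [habs, hsplit, integral_const_mul _ _, integral_gaussian_Ioi]
  field_simp

lemma gaussian_poly_integral {K : ℕ} (c d : Fin K → ℝ) (hc : ∀ i, 0 < c i) (C : ℝ) :
    ∫ u : Fin K → ℝ, (∏ i, Real.exp (-(c i) * (u i) ^ 2)) * (C + ∑ j, d j * (u j) ^ 2)
      = (∏ i, Real.sqrt (π / c i)) * (C + ∑ j, d j / (2 * c j)) := by
  classical
  set g : Fin K → ℝ → ℝ := fun i x => Real.exp (-(c i) * x ^ 2) with hg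
  set h : Fin K → Fin K → ℝ → ℝ :=
    fun j => Function.update g j (fun x => d j * (x ^ 2 * Real.exp (-(c j) * x ^ 2))) with hh
  have hgint : ∀ i, Integrable (g i) := fun i => integrable_exp_neg_mul_sq (hc i)
  have hhint : ∀ j i, Integrable (h j i) := by
    intro j i
    rcases eq_or_ne i j with rfl | hij
    · simp only [hh, Function.update_self]
      exact ((integrable_sq_exp (hc i)).const_mul _)
    · simp only [hh, Function.update_of_ne hij]
      exact hgint i
  have hpt : ∀ u : Fin K → ℝ,
      (∏ i, g i (u i)) * (C + ∑ j, d j * (u j) ^ 2)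
        = C * ∏ i, g i (u i) + ∑ j, ∏ i, h j i (u i) := by
    intro u
    have hprod : ∀ j, ∏ i, h j i (u i) = (d j * (u j) ^ 2) * ∏ i, g i (u i) := by
      intro j
      have h1 : ∏ i, h j i (u i)
          = (d j * ((u j) ^ 2 * Real.exp (-(c j) * (u j) ^ 2))) * ∏ i ∈ Finset.univ.erase j, g i (u i) := by
        rw [← Finset.mul_prod_erase Finset.univ _ (Finset.mem_univ j)]
        congr 1
        · simp [hh]
        · apply Finset.prod_congr rfl
          intro i hi
          simp [hh, Function.update_of_ne (Finset.ne_of_mem_erase hi)]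
      have h2 : ∏ i, g i (u i) = g j (u j) * ∏ i ∈ Finset.univ.erase j, g i (u i) :=
        (Finset.mul_prod_erase Finset.univ _ (Finset.mem_univ j)).symm
      rw [h1, h2]
      simp only [hg]
      ring
    rw [Finset.sum_congr rfl (fun j _ => hprod j)]
    rw [← Finset.sum_mul]
    ring
  calc ∫ u : Fin K → ℝ, (∏ i, g i (u i)) * (C + ∑ j, d j * (u j) ^ 2)
      = ∫ u : Fin K → ℝ, (C * ∏ i, g i (u i) + ∑ j, ∏ i, h j i (u i)) := by
        exact integral_congr_ae (Filter.Eventually.of_forall hpt)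
    _ = C * (∏ i, ∫ x : ℝ, g i x) + ∑ j, ∏ i, ∫ x : ℝ, h j i x := by
        rw [integral_add, integral_const_mul, integral_finset_sum]
        · rw [integral_fintype_prod_volume_eq_prod]
          congr 1
          apply Finset.sum_congr rfl
          intro j _
          exact integral_fintype_prod_volume_eq_prod (fun i => h j i)
        · intro j _
          exact Integrable.fintype_prod (fun i => hhint j i)
        · exact (Integrable.fintype_prod hgint).const_mul C
        · exact integrable_finset_sum _ (fun j _ => Integrable.fintype_prod (fun i => hhint j i))
    _ = (∏ i, Real.sqrt (π / c i)) * (C + ∑ j, d j / (2 * c j)) := by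
        have hge : ∀ i, ∫ x : ℝ, g i x = Real.sqrt (π / c i) := by
          intro i; simpa [hg] using integral_gaussian (c i)
        have hsqpos : ∀ i, (0:ℝ) < Real.sqrt (π / c i) := by
          intro i
          exact Real.sqrt_pos.2 (div_pos pi_pos (hc i))
        have hhe : ∀ j, ∏ i, ∫ x : ℝ, h j i x
            = (∏ i, Real.sqrt (π / c i)) * (d j / (2 * c j)) := by
          intro j
          have h1 : ∏ i, ∫ x : ℝ, h j i x
              = (∫ x : ℝ, h j j x) * ∏ i ∈ Finset.univ.erase j, ∫ x : ℝ, h j i x :=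
            (Finset.mul_prod_erase Finset.univ _ (Finset.mem_univ j)).symm
          have h2 : (∫ x : ℝ, h j j x) = d j * (Real.sqrt (π / c j) / (2 * c j)) := by
            simp only [hh, Function.update_self]
            rw [integral_const_mul, integral_sq_exp (hc j)]
          have h3 : ∏ i ∈ Finset.univ.erase j, (∫ x : ℝ, h j i x)
              = ∏ i ∈ Finset.univ.erase j, Real.sqrt (π / c i) := by
            apply Finset.prod_congr rfl
            intro i hi
            rw [show h j i = g i by simp [hh, Function.update_of_ne (Finset.ne_of_mem_erase hi)]]
            exact hge i
          have h4 : ∏ i, Real.sqrt (π / c i)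
              = Real.sqrt (π / c j) * ∏ i ∈ Finset.univ.erase j, Real.sqrt (π / c i) :=
            (Finset.mul_prod_erase Finset.univ _ (Finset.mem_univ j)).symm
          rw [h1, h2, h3, h4]
          have : (2 * c j) ≠ 0 := by have := hc j; positivity
          field_simp
        rw [Finset.prod_congr rfl (fun i _ => hge i),
          Finset.sum_congr rfl (fun j _ => hhe j), ← Finset.mul_sum]
        ring


lemma pointwise_log (E : ℝ) (hE : 0 < E) (K : ℕ) (t : Fin K → ℝ) :
    (Real.pi ^ (-(K : ℝ) / 2) * (1 + 2 * (K : ℝ) * E) ^ (-(1 : ℝ) / 2) *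
        Real.exp (-∑ i, (t i) ^ 2 + 2 * E * (∑ i, t i) ^ 2 / (1 + 2 * (K : ℝ) * E))) *
      Real.log
        ((Real.pi ^ (-(K : ℝ) / 2) * (1 + 2 * (K : ℝ) * E) ^ (-(1 : ℝ) / 2) *
            Real.exp (-∑ i, (t i) ^ 2 + 2 * E * (∑ i, t i) ^ 2 / (1 + 2 * (K : ℝ) * E))) /
          ∏ i, (Real.pi * (1 + 2 * E)) ^ (-(1 : ℝ) / 2) *
            Real.exp (-(t i) ^ 2 / (1 + 2 * E)))
    = (Real.pi ^ (-(K : ℝ) / 2) * (1 + 2 * (K : ℝ) * E) ^ (-(1 : ℝ) / 2) *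
        Real.exp (-∑ i, (t i) ^ 2 + 2 * E * (∑ i, t i) ^ 2 / (1 + 2 * (K : ℝ) * E))) *
      ((1 / 2) * Real.log ((1 + 2 * E) ^ K / (1 + 2 * (K : ℝ) * E)) +
        (-(2 * E / (1 + 2 * E)) * ∑ i, (t i) ^ 2 +
          (2 * E / (1 + 2 * (K : ℝ) * E)) * (∑ i, t i) ^ 2)) := by
  have hτ : (0:ℝ) < 1 + 2 * E := by linarith
  have hσ : (0:ℝ) < 1 + 2 * (K : ℝ) * E := by
    have : (0:ℝ) ≤ (K : ℝ) := Nat.cast_nonneg K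
    nlinarith
  have hπ : (0:ℝ) < Real.pi := pi_pos
  congr 1
  have hA : (0:ℝ) < Real.pi ^ (-(K : ℝ) / 2) := rpow_pos_of_pos hπ _
  have hB : (0:ℝ) < (1 + 2 * (K : ℝ) * E) ^ (-(1 : ℝ) / 2) := rpow_pos_of_pos hσ _
  have hD : (0:ℝ) < (Real.pi * (1 + 2 * E)) ^ (-(1 : ℝ) / 2) :=
    rpow_pos_of_pos (mul_pos hπ hτ) _
  set P : ℝ := ∑ i, (t i) ^ 2 with hP
  set S : ℝ := (∑ i, t i) ^ 2 with hS
  have hden : (∏ i : Fin K, (Real.pi * (1 + 2 * E)) ^ (-(1 : ℝ) / 2) *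
      Real.exp (-(t i) ^ 2 / (1 + 2 * E)))
      = ((Real.pi * (1 + 2 * E)) ^ (-(1 : ℝ) / 2)) ^ K * Real.exp (-P / (1 + 2 * E)) := by
    rw [Finset.prod_mul_distrib, Finset.prod_const, Finset.card_univ, Fintype.card_fin,
      ← Real.exp_sum]
    congr 1
    rw [hP, ← Finset.sum_div, ← Finset.sum_neg_distrib]
  rw [hden, Real.log_div (by positivity) (by positivity),
    Real.log_mul (by positivity) (Real.exp_ne_zero _),
    Real.log_mul (ne_of_gt hA) (ne_of_gt hB),
    Real.log_mul (by positivity) (Real.exp_ne_zero _),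
    Real.log_exp, Real.log_exp, Real.log_rpow hπ, Real.log_rpow hσ,
    Real.log_pow, Real.log_rpow (mul_pos hπ hτ), Real.log_mul (ne_of_gt hπ) (ne_of_gt hτ),
    Real.log_div (by positivity) (ne_of_gt hσ), Real.log_pow]
  field_simp
  ring

lemma sum_sq_eq {K : ℕ} (y : EuclideanSpace ℝ (Fin K)) : ∑ i, (y i) ^ 2 = ‖y‖ ^ 2 := by
  rw [EuclideanSpace.norm_eq, Real.sq_sqrt (by positivity)]
  simp [sq_abs]

lemma main_subst {K : ℕ} (hK0 : 0 < K) (u : EuclideanSpace ℝ (Fin K))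
    (b : OrthonormalBasis (Fin K) ℝ (EuclideanSpace ℝ (Fin K)))
    (hb : b ⟨0, hK0⟩ = (WithLp.equiv 2 (Fin K → ℝ)).symm (fun _ => (Real.sqrt K)⁻¹)) :
    (∑ i, (b.repr.symm u i) ^ 2 = ∑ i, (u i) ^ 2) ∧
      (∑ i, b.repr.symm u i = Real.sqrt K * u ⟨0, hK0⟩) := by
  have hKpos : (0:ℝ) < Real.sqrt K := Real.sqrt_pos.2 (by exact_mod_cast hK0)
  constructor
  · rw [sum_sq_eq, sum_sq_eq, LinearIsometryEquiv.norm_map]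
  · have h1 : inner ℝ (b ⟨0, hK0⟩) (b.repr.symm u) = u ⟨0, hK0⟩ := by
      rw [← OrthonormalBasis.repr_apply_apply, LinearIsometryEquiv.apply_symm_apply]
    rw [hb, PiLp.inner_apply] at h1
    simp only [RCLike.inner_apply, conj_trivial, WithLp.equiv_symm_apply, PiLp.toLp_apply] at h1
    rw [← Finset.sum_mul] at h1
    field_simp at h1
    rw [h1]

lemma exists_basis (K : ℕ) (hK0 : 0 < K) :
    ∃ b : OrthonormalBasis (Fin K) ℝ (EuclideanSpace ℝ (Fin K)),
      b ⟨0, hK0⟩ = (WithLp.equiv 2 (Fin K → ℝ)).symm (fun _ => (Real.sqrt K)⁻¹) := by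
  have hKR : (0:ℝ) < (K:ℝ) := by exact_mod_cast hK0
  set v : EuclideanSpace ℝ (Fin K) :=
    (WithLp.equiv 2 (Fin K → ℝ)).symm (fun _ => (Real.sqrt K)⁻¹) with hv
  have hself : inner ℝ v v = 1 := by
    rw [PiLp.inner_apply]
    simp only [RCLike.inner_apply, conj_trivial, hv, WithLp.equiv_symm_apply, PiLp.toLp_apply]
    have hmul : ((Real.sqrt (K:ℝ))⁻¹ * (Real.sqrt (K:ℝ))⁻¹ : ℝ) = (K:ℝ)⁻¹ := by
      rw [← mul_inv, Real.mul_self_sqrt hKR.le]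
    rw [Finset.sum_const, Finset.card_univ, Fintype.card_fin, nsmul_eq_mul, hmul]
    field_simp
  have horth : Orthonormal ℝ
      (Set.restrict {(⟨0, hK0⟩ : Fin K)} (fun _ : Fin K => v)) := by
    rw [orthonormal_iff_ite]
    rintro ⟨i, hi⟩ ⟨j, hj⟩
    simp only [Set.mem_singleton_iff] at hi hj
    subst hi; subst hj
    simpa [Set.restrict] using hself
  obtain ⟨b, hb⟩ := Orthonormal.exists_orthonormalBasis_extension_of_card_eq
    (𝕜 := ℝ) (by simp [finrank_euclideanSpace]) horth
  exact ⟨b, by simpa using hb _ rfl⟩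

theorem homodyne_relative_entropy (E : ℝ) (hE : 0 < E) (K : ℕ) (hK : 1 ≤ K) :
    ∫ t : Fin K → ℝ,
        (Real.pi ^ (-(K : ℝ) / 2) * (1 + 2 * (K : ℝ) * E) ^ (-(1 : ℝ) / 2) *
            Real.exp (-∑ i, (t i) ^ 2 +
              2 * E * (∑ i, t i) ^ 2 / (1 + 2 * (K : ℝ) * E))) *
          Real.log
            ((Real.pi ^ (-(K : ℝ) / 2) * (1 + 2 * (K : ℝ) * E) ^ (-(1 : ℝ) / 2) *
                Real.exp (-∑ i, (t i) ^ 2 +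
                  2 * E * (∑ i, t i) ^ 2 / (1 + 2 * (K : ℝ) * E))) /
              ∏ i, (Real.pi * (1 + 2 * E)) ^ (-(1 : ℝ) / 2) *
                Real.exp (-(t i) ^ 2 / (1 + 2 * E))) =
      (1 / 2) * Real.log ((1 + 2 * E) ^ K / (1 + 2 * (K : ℝ) * E)) := by
  classical
  have hK0 : 0 < K := hK
  have hτ : (0:ℝ) < 1 + 2 * E := by linarith
  have hσ : (0:ℝ) < 1 + 2 * (K : ℝ) * E := by
    have : (0:ℝ) ≤ (K : ℝ) := Nat.cast_nonneg K
    nlinarith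
  have hπ : (0:ℝ) < Real.pi := pi_pos
  set i₀ : Fin K := ⟨0, hK0⟩ with hi₀
  set σ : ℝ := 1 + 2 * (K : ℝ) * E with hσdef
  set τ : ℝ := 1 + 2 * E with hτdef
  set C : ℝ := (1/2) * Real.log ((1 + 2 * E) ^ K / σ) with hCdef
  set c : Fin K → ℝ := fun i => if i = i₀ then σ⁻¹ else 1 with hcdef
  set d : Fin K → ℝ := fun j =>
    if j = i₀ then 2 * E * (K : ℝ) / σ - 2 * E / τ else -(2 * E / τ) with hddef
  have hc : ∀ i, 0 < c i := by
    intro i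
    by_cases h : i = i₀ <;> simp only [hcdef, h, if_pos, if_neg, ite_true, ite_false] <;>
      [exact inv_pos.2 hσ; exact one_pos]
  set A : ℝ := Real.pi ^ (-(K : ℝ) / 2) * σ ^ (-(1 : ℝ) / 2) with hAdef
  obtain ⟨b, hb⟩ := exists_basis K hK0
  have hcoef : ∀ (w : EuclideanSpace ℝ (Fin K)),
      Real.exp (-∑ i, (w i) ^ 2 + 2 * E * ((K:ℝ) * (w i₀) ^ 2) / σ) *
        (C + (-(2 * E / τ) * ∑ i, (w i) ^ 2 + (2 * E / σ) * ((K:ℝ) * (w i₀) ^ 2)))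
      = (∏ i, Real.exp (-(c i) * (w i) ^ 2)) * (C + ∑ j, d j * (w j) ^ 2) := by
    intro w
    have h1 : ∑ i, -(c i) * (w i) ^ 2
        = -∑ i, (w i) ^ 2 + 2 * E * ((K:ℝ) * (w i₀) ^ 2) / σ := by
      have hc' : ∀ i, -(c i) = -1 + (if i = i₀ then 2 * (K:ℝ) * E / σ else 0) := by
        intro i
        by_cases h : i = i₀
        · simp only [hcdef, h, ite_true]
          have hσ' : σ ≠ 0 := ne_of_gt hσ
          field_simp
          rw [hσdef]; ring
        · simp [hcdef, h]
      simp_rw [hc', add_mul, Finset.sum_add_distrib, ite_mul, zero_mul,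
        Finset.sum_ite_eq', Finset.mem_univ, if_pos]
      rw [← Finset.sum_neg_distrib]
      simp only [neg_one_mul]
      ring
    have h2 : ∑ j, d j * (w j) ^ 2
        = -(2 * E / τ) * ∑ i, (w i) ^ 2 + (2 * E / σ) * ((K:ℝ) * (w i₀) ^ 2) := by
      have hd' : ∀ j, d j = -(2 * E / τ) + (if j = i₀ then 2 * E * (K:ℝ) / σ else 0) := by
        intro j
        by_cases h : j = i₀
        · simp [hddef, h]; ring
        · simp [hddef, h]
      simp_rw [hd', add_mul, Finset.sum_add_distrib, ite_mul, zero_mul,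
        Finset.sum_ite_eq', Finset.mem_univ, if_pos]
      rw [← Finset.mul_sum]
      ring
    rw [← h1, ← h2, Real.exp_sum]
  calc
    ∫ t : Fin K → ℝ,
        (Real.pi ^ (-(K : ℝ) / 2) * σ ^ (-(1 : ℝ) / 2) *
            Real.exp (-∑ i, (t i) ^ 2 + 2 * E * (∑ i, t i) ^ 2 / σ)) *
          Real.log
            ((Real.pi ^ (-(K : ℝ) / 2) * σ ^ (-(1 : ℝ) / 2) *
                Real.exp (-∑ i, (t i) ^ 2 + 2 * E * (∑ i, t i) ^ 2 / σ)) /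
              ∏ i, (Real.pi * τ) ^ (-(1 : ℝ) / 2) * Real.exp (-(t i) ^ 2 / τ))
      = ∫ t : Fin K → ℝ,
          A * (Real.exp (-∑ i, (t i) ^ 2 + 2 * E * (∑ i, t i) ^ 2 / σ) *
            (C + (-(2 * E / τ) * ∑ i, (t i) ^ 2 + (2 * E / σ) * (∑ i, t i) ^ 2))) := by
        apply integral_congr_ae
        apply Filter.Eventually.of_forall
        intro t
        dsimp only
        rw [hAdef, hCdef, hσdef, hτdef, pointwise_log E hE K t]
        ring
    _ = ∫ x : EuclideanSpace ℝ (Fin K),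
          A * (Real.exp (-∑ i, (x i) ^ 2 + 2 * E * (∑ i, x i) ^ 2 / σ) *
            (C + (-(2 * E / τ) * ∑ i, (x i) ^ 2 + (2 * E / σ) * (∑ i, x i) ^ 2))) := by
        exact ((EuclideanSpace.volume_preserving_symm_measurableEquiv_toLp (Fin K)).integral_comp'
          (fun t : Fin K → ℝ =>
            A * (Real.exp (-∑ i, (t i) ^ 2 + 2 * E * (∑ i, t i) ^ 2 / σ) *
              (C + (-(2 * E / τ) * ∑ i, (t i) ^ 2 + (2 * E / σ) * (∑ i, t i) ^ 2))))).symm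
    _ = ∫ u : EuclideanSpace ℝ (Fin K),
          A * (Real.exp (-∑ i, (b.repr.symm u i) ^ 2 +
              2 * E * (∑ i, b.repr.symm u i) ^ 2 / σ) *
            (C + (-(2 * E / τ) * ∑ i, (b.repr.symm u i) ^ 2 +
              (2 * E / σ) * (∑ i, b.repr.symm u i) ^ 2))) := by
        exact ((b.measurePreserving_measurableEquiv.symm).integral_comp'
          (fun x : EuclideanSpace ℝ (Fin K) =>
            A * (Real.exp (-∑ i, (x i) ^ 2 + 2 * E * (∑ i, x i) ^ 2 / σ) *
              (C + (-(2 * E / τ) * ∑ i, (x i) ^ 2 + (2 * E / σ) * (∑ i, x i) ^ 2))))).symm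
    _ = ∫ u : EuclideanSpace ℝ (Fin K),
          A * ((∏ i, Real.exp (-(c i) * (u i) ^ 2)) * (C + ∑ j, d j * (u j) ^ 2)) := by
        apply integral_congr_ae
        apply Filter.Eventually.of_forall
        intro u
        dsimp only
        obtain ⟨h1, h2⟩ := main_subst hK0 u b hb
        rw [h1, h2, mul_pow, Real.sq_sqrt (Nat.cast_nonneg K), hcoef u]
    _ = ∫ u : Fin K → ℝ,
          A * ((∏ i, Real.exp (-(c i) * (u i) ^ 2)) * (C + ∑ j, d j * (u j) ^ 2)) := by
        exact ((EuclideanSpace.volume_preserving_symm_measurableEquiv_toLp (Fin K)).integral_comp'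
          (fun u : Fin K → ℝ =>
            A * ((∏ i, Real.exp (-(c i) * (u i) ^ 2)) * (C + ∑ j, d j * (u j) ^ 2))))
    _ = A * ((∏ i, Real.sqrt (π / c i)) * (C + ∑ j, d j / (2 * c j))) := by
        rw [integral_const_mul, gaussian_poly_integral c d hc C]
    _ = C := by
        have hsum : ∑ j, d j / (2 * c j) = 0 := by
          rw [← Finset.add_sum_erase _ _ (Finset.mem_univ i₀)]
          have h1 : d i₀ / (2 * c i₀) = (2 * E * (K:ℝ) / σ - 2 * E / τ) / (2 * σ⁻¹) := by
            simp [hddef, hcdef]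
          have h2 : ∑ j ∈ Finset.univ.erase i₀, d j / (2 * c j)
              = ((K:ℝ) - 1) * (-(2 * E / τ) / 2) := by
            rw [Finset.sum_congr rfl (fun j hj => by
              rw [show d j / (2 * c j) = -(2 * E / τ) / 2 by
                simp [hddef, hcdef, Finset.ne_of_mem_erase hj]])]
            rw [Finset.sum_const, Finset.card_erase_of_mem (Finset.mem_univ i₀),
              Finset.card_univ, Fintype.card_fin]
            rw [nsmul_eq_mul, Nat.cast_sub hK]
            simp
          rw [h1, h2]
          have hσ' : σ ≠ 0 := ne_of_gt hσ
          have hτ' : τ ≠ 0 := ne_of_gt hτ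
          field_simp
          ring
        have hprod : A * (∏ i, Real.sqrt (π / c i)) = 1 := by
          rw [← Finset.mul_prod_erase _ _ (Finset.mem_univ i₀)]
          have h1 : Real.sqrt (π / c i₀) = Real.sqrt π * Real.sqrt σ := by
            simp only [hcdef, ite_true, if_pos]
            rw [show π / σ⁻¹ = π * σ by field_simp, Real.sqrt_mul (le_of_lt hπ)]
          have h2 : ∏ i ∈ Finset.univ.erase i₀, Real.sqrt (π / c i)
              = Real.sqrt π ^ (K - 1) := by
            rw [Finset.prod_congr rfl (fun j hj => by
              rw [show Real.sqrt (π / c j) = Real.sqrt π by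
                simp [hcdef, Finset.ne_of_mem_erase hj]])]
            rw [Finset.prod_const, Finset.card_erase_of_mem (Finset.mem_univ i₀),
              Finset.card_univ, Fintype.card_fin]
          rw [h1, h2, hAdef]
          have hs1 : Real.sqrt π * Real.sqrt π ^ (K - 1) = Real.sqrt π ^ K := by
            rw [← pow_succ', Nat.sub_add_cancel hK]
          have hs2 : Real.sqrt π ^ K = π ^ ((K:ℝ) / 2) := by
            rw [Real.sqrt_eq_rpow, ← Real.rpow_natCast (π ^ ((1:ℝ)/2)) K,
              ← Real.rpow_mul (le_of_lt hπ)]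
            norm_num
            ring_nf
          have hs3 : Real.sqrt σ = σ ^ ((1:ℝ) / 2) := Real.sqrt_eq_rpow σ
          calc π ^ (-(K:ℝ) / 2) * σ ^ (-(1:ℝ) / 2) *
                (Real.sqrt π * Real.sqrt σ * Real.sqrt π ^ (K - 1))
              = (π ^ (-(K:ℝ) / 2) * (Real.sqrt π * Real.sqrt π ^ (K - 1))) *
                (σ ^ (-(1:ℝ) / 2) * Real.sqrt σ) := by ring
            _ = 1 := by
                rw [hs1, hs2, hs3, ← Real.rpow_add hπ, ← Real.rpow_add hσ,
                  show -(K:ℝ)/2 + (K:ℝ)/2 = (0:ℝ) by ring,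
                  show (-1:ℝ)/2 + 1/2 = (0:ℝ) by norm_num, Real.rpow_zero, Real.rpow_zero]
                norm_num
        rw [hsum]
        rw [show A * ((∏ i, Real.sqrt (π / c i)) * (C + 0)) =
          (A * ∏ i, Real.sqrt (π / c i)) * C by ring, hprod, one_mul]
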